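/- arXiv:0907.4872 — 2 statements merged into one kernel-verified Lean document; each statement's English description precedes it below -/
import Mathlib

section
/- Let r ∈ int(D_d) be reduced (r_0 ≠ 0, M_r contractive). For each x ∈ ℤ^d, the SRS tile T_r(x) := Lim_{n→∞} M_r^n τ_r^{-n}(x) (Hausdorff limit) exists, is a nonempty compact set, and satisfies the set equation T_r(x) = ⋃_{y ∈ τ_r^{-1}(x)} M_r T_r(y). -/
open Matrix Filter

noncomputable section

/-- Scalar product r·z of a real vector with an integer vector. -/
def srsDot {d : ℕ} (r : Fin d → ℝ) (z : Fin d → ℤ) : ℝ := ∑ i, r i * (z i : ℝ)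

/-- The shift radix map τ_r(z) = (z_1,...,z_{d-1}, -⌊r·z⌋). -/
def srsTau {d : ℕ} (r : Fin d → ℝ) (z : Fin d → ℤ) : Fin d → ℤ :=
  fun i => if h : (i : ℕ) + 1 < d then z ⟨(i : ℕ) + 1, h⟩ else -⌊srsDot r z⌋

/-- The companion matrix M_r of r. -/
def companion {d : ℕ} (r : Fin d → ℝ) : Matrix (Fin d) (Fin d) ℝ :=
  fun i j => if (i : ℕ) + 1 < d then (if (j : ℕ) = (i : ℕ) + 1 then 1 else 0) else -r j

/-- The vector (0,...,0,v)^t. -/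
def digitVec {d : ℕ} (v : ℝ) : Fin d → ℝ := fun i => if (i : ℕ) + 1 = d then v else 0

/-- Coordinatewise cast of an integer vector to a real vector. -/
def intToReal {d : ℕ} (z : Fin d → ℤ) : Fin d → ℝ := fun i => (z i : ℝ)

/-- M_r is contractive (spectral radius < 1). -/
def srsContractive {d : ℕ} (r : Fin d → ℝ) : Prop :=
  ∃ C > (0:ℝ), ∃ ρ : ℝ, 0 ≤ ρ ∧ ρ < 1 ∧
    ∀ (n : ℕ) (x : Fin d → ℝ), ‖((companion r) ^ n).mulVec x‖ ≤ C * ρ ^ n * ‖x‖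

/-- The SRS tile T_r(x), as the set of limit points lim M_r^n z_{-n} with
τ_r^n(z_{-n}) = x. -/
def srsTile {d : ℕ} (r : Fin d → ℝ) (x : Fin d → ℤ) : Set (Fin d → ℝ) :=
  {t | ∃ z : ℕ → (Fin d → ℤ), (∀ n, (srsTau r)^[n] (z n) = x) ∧
    Tendsto (fun n => ((companion r) ^ n).mulVec (intToReal (z n))) atTop (nhds t)}

set_option linter.unusedSectionVars false
set_option linter.unusedVariables false
set_option linter.unnecessarySimpa false
set_option maxHeartbeats 1000000

-- L1
theorem mulVec_intToReal {m : ℕ} (r : Fin (m+1) → ℝ) (z : Fin (m+1) → ℤ) :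
    (companion r).mulVec (intToReal z)
      = intToReal (srsTau r z) - digitVec (Int.fract (srsDot r z)) := by
  funext i
  simp only [Pi.sub_apply, mulVec, dotProduct, companion, intToReal, srsTau, digitVec]
  by_cases h : (i : ℕ) + 1 < m + 1
  · have h2 : ¬ ((i:ℕ) + 1 = m + 1) := by omega
    simp only [h, if_true, dif_pos h, h2, if_false, sub_zero]
    have : ∀ j : Fin (m+1),
        (if (j:ℕ) = (i:ℕ) + 1 then (1:ℝ) else 0) * (z j : ℝ)
          = if (⟨(i:ℕ)+1, h⟩ : Fin (m+1)) = j then (z j : ℝ) else 0 := by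
      intro j
      by_cases hj : (j : ℕ) = (i:ℕ) + 1
      · rw [if_pos hj, if_pos (by exact (Fin.ext hj.symm)), one_mul]
      · rw [if_neg hj, if_neg (by intro hc; exact hj (by rw [← hc])), zero_mul]
    rw [Finset.sum_congr rfl (fun j _ => this j), Finset.sum_ite_eq]
    simp
  · have h2 : (i:ℕ) + 1 = m + 1 := by omega
    simp only [h2, lt_self_iff_false, if_false, dite_false, if_true]
    have hs : ∑ x : Fin (m+1), (-r x) * (z x : ℝ) = -(srsDot r z) := by
      rw [srsDot, ← Finset.sum_neg_distrib]
      exact Finset.sum_congr rfl (fun j _ => by ring)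
    rw [hs, Int.fract]
    push_cast
    ring

-- norm of digitVec of a fract
theorem norm_digitVec_fract {m : ℕ} (v : ℝ) :
    ‖(digitVec (Int.fract v) : Fin (m+1) → ℝ)‖ ≤ 1 := by
  apply pi_norm_le_iff_of_nonneg zero_le_one |>.mpr
  intro i
  simp only [digitVec]
  split_ifs
  · rw [Real.norm_eq_abs, abs_of_nonneg (Int.fract_nonneg v)]
    exact le_of_lt (Int.fract_lt_one v)
  · simp

-- generic: mulVec is Lipschitz with explicit constant
theorem mulVec_norm_le {d : ℕ} (A : Matrix (Fin d) (Fin d) ℝ) (v : Fin d → ℝ) :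
    ‖A.mulVec v‖ ≤ (∑ i, ∑ j, |A i j|) * ‖v‖ := by
  have hS : (0:ℝ) ≤ (∑ i, ∑ j, |A i j|) := by positivity
  apply pi_norm_le_iff_of_nonneg (by positivity) |>.mpr
  intro i
  rw [Real.norm_eq_abs, mulVec, dotProduct]
  calc |∑ j, A i j * v j| ≤ ∑ j, |A i j * v j| := Finset.abs_sum_le_sum_abs _ _
    _ ≤ ∑ j, |A i j| * ‖v‖ := by
        apply Finset.sum_le_sum
        intro j _
        rw [abs_mul]
        exact mul_le_mul_of_nonneg_left (norm_le_pi_norm v j) (abs_nonneg _)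
    _ = (∑ j, |A i j|) * ‖v‖ := by rw [Finset.sum_mul]
    _ ≤ (∑ i, ∑ j, |A i j|) * ‖v‖ := by
        apply mul_le_mul_of_nonneg_right _ (norm_nonneg v)
        exact Finset.single_le_sum (f := fun i => ∑ j, |A i j|)
          (fun k _ => by positivity) (Finset.mem_univ i)

theorem continuous_mulVec {d : ℕ} (A : Matrix (Fin d) (Fin d) ℝ) :
    Continuous (fun v : Fin d → ℝ => A.mulVec v) := by
  apply continuous_pi
  intro i
  simp only [mulVec, dotProduct]
  exact continuous_finset_sum _ (fun j _ => (continuous_const.mul (continuous_apply j)))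

-- entries bound implies det bound
theorem abs_det_le {d : ℕ} (A : Matrix (Fin d) (Fin d) ℝ) (c : ℝ) (hc : 0 ≤ c)
    (h : ∀ i j, |A i j| ≤ c) : |A.det| ≤ (Nat.factorial d : ℝ) * c ^ d := by
  rw [Matrix.det_apply]
  calc |∑ σ : Equiv.Perm (Fin d), Equiv.Perm.sign σ • ∏ i, A (σ i) i|
      ≤ ∑ σ : Equiv.Perm (Fin d), |Equiv.Perm.sign σ • ∏ i, A (σ i) i| :=
        Finset.abs_sum_le_sum_abs _ _
    _ ≤ ∑ _σ : Equiv.Perm (Fin d), c ^ d := by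
        apply Finset.sum_le_sum
        intro σ _
        rw [Units.smul_def, zsmul_eq_mul, abs_mul]
        have h1 : |((Equiv.Perm.sign σ : ℤ) : ℝ)| = 1 := by
          rcases Int.units_eq_one_or (Equiv.Perm.sign σ) with h' | h' <;> rw [h'] <;> norm_num
        rw [h1, one_mul]
        calc |∏ i, A (σ i) i| = ∏ i, |A (σ i) i| := by rw [Finset.abs_prod]
          _ ≤ ∏ _i : Fin d, c := Finset.prod_le_prod (fun i _ => abs_nonneg _)
              (fun i _ => h _ _)
          _ = c ^ d := by simp
    _ = (Nat.factorial d : ℝ) * c ^ d := by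
        rw [Finset.sum_const, nsmul_eq_mul]
        congr 1
        norm_num [Fintype.card_perm]

theorem abs_det_companion {m : ℕ} (r : Fin (m+1) → ℝ) :
    |(companion r).det| = |r 0| := by
  rw [Matrix.det_succ_column_zero]
  have key : ∀ i : Fin (m+1),
      (-1:ℝ) ^ (i:ℕ) * companion r i 0 * ((companion r).submatrix i.succAbove Fin.succ).det
        = if i = Fin.last m then (-1:ℝ)^m * (- r 0) else 0 := by
    intro i
    by_cases hi : i = Fin.last m
    · subst hi
      rw [if_pos rfl]
      have h1 : companion r (Fin.last m) 0 = -r 0 := by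
        simp only [companion, Fin.val_last, lt_self_iff_false, if_false]
      have h2 : ((companion r).submatrix (Fin.last m).succAbove Fin.succ)
          = (1 : Matrix (Fin m) (Fin m) ℝ) := by
        funext a b
        simp only [Matrix.submatrix_apply, Fin.succAbove_last, companion, Matrix.one_apply]
        have ha : ((Fin.castSucc a : Fin (m+1)) : ℕ) + 1 < m + 1 := by
          simp only [Fin.coe_castSucc]
          omega
        rw [if_pos ha]
        by_cases hab : a = b
        · subst hab
          rw [if_pos (by simp), if_pos rfl]
        · rw [if_neg, if_neg hab]
          intro hc
          simp only [Fin.val_succ, Fin.coe_castSucc] at hc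
          exact hab (Fin.ext (by omega))
      rw [h1, h2, Matrix.det_one, mul_one, Fin.val_last]
    · rw [if_neg hi]
      have hzero : companion r i 0 = 0 := by
        have hlt : (i:ℕ) + 1 < m + 1 := by
          have h1 := i.isLt
          have h2 : (i:ℕ) ≠ m := fun hc => hi (Fin.ext (by simpa using hc))
          omega
        simp only [companion, if_pos hlt]
        rw [if_neg (by simp)]
      rw [hzero]
      ring
  rw [Finset.sum_congr rfl (fun i _ => key i),
    Finset.sum_ite_eq' Finset.univ (Fin.last m) (fun _ => (-1:ℝ)^m * (- r 0)),
    if_pos (Finset.mem_univ _)]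
  rw [abs_mul, abs_pow, abs_neg, abs_one, one_pow, one_mul, abs_neg]

theorem abs_r0_le_one {m : ℕ} (r : Fin (m+1) → ℝ) (hcontr : srsContractive r) :
    |r 0| ≤ 1 := by
  obtain ⟨C, hC, ρ, hρ0, hρ1, hb⟩ := hcontr
  by_contra hgt
  push_neg at hgt
  -- entries of M^n are bounded by C
  have hent : ∀ n : ℕ, ∀ i j, |((companion r) ^ n) i j| ≤ C := by
    intro n i j
    have h1 : ((companion r) ^ n).mulVec (Pi.single j 1) i = ((companion r) ^ n) i j := by
      simp [Matrix.mulVec_single]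
    rw [← h1]
    calc |((companion r) ^ n).mulVec (Pi.single j 1) i|
        ≤ ‖((companion r) ^ n).mulVec (Pi.single j 1)‖ := by
          rw [← Real.norm_eq_abs]; exact norm_le_pi_norm _ i
      _ ≤ C * ρ ^ n * ‖(Pi.single j 1 : Fin (m+1) → ℝ)‖ := hb n _
      _ ≤ C * 1 * 1 := by
          apply mul_le_mul
          · apply mul_le_mul_of_nonneg_left _ (le_of_lt hC)
            exact pow_le_one₀ hρ0 (le_of_lt hρ1)
          · rw [Pi.norm_single]; simp
          · exact norm_nonneg _
          · linarith
      _ = C := by ring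
  -- so |det (M^n)| = |r0|^n is bounded
  have hdet : ∀ n : ℕ, |r 0| ^ n ≤ (Nat.factorial (m+1) : ℝ) * C ^ (m+1) := by
    intro n
    have h1 : |((companion r) ^ n).det| ≤ (Nat.factorial (m+1) : ℝ) * C ^ (m+1) :=
      abs_det_le _ C (le_of_lt hC) (hent n)
    rwa [Matrix.det_pow, abs_pow, abs_det_companion] at h1
  -- but |r0|^n → ∞
  obtain ⟨n, hn⟩ := (tendsto_pow_atTop_atTop_of_one_lt hgt).eventually_gt_atTop
    ((Nat.factorial (m+1) : ℝ) * C ^ (m+1)) |>.exists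
  exact absurd (hdet n) (not_le.mpr hn)

theorem exists_int_mul_mem {r0 : ℝ} (h0 : r0 ≠ 0) (h1 : |r0| ≤ 1) (a : ℝ) :
    ∃ k : ℤ, a ≤ r0 * k ∧ r0 * k < a + 1 := by
  rcases lt_or_gt_of_ne h0 with hneg | hpos
  · refine ⟨⌊a / r0⌋, ?_, ?_⟩
    · have := Int.floor_le (a / r0)
      calc a = (a / r0) * r0 := by field_simp
        _ ≤ (⌊a / r0⌋ : ℝ) * r0 := by
            apply mul_le_mul_of_nonpos_right this (le_of_lt hneg)
        _ = r0 * ⌊a / r0⌋ := by ring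
    · have h2 : (a / r0 : ℝ) - 1 < ⌊a / r0⌋ := by
        have := Int.sub_one_lt_floor (a / r0)
        linarith
      have habs : -r0 ≤ 1 := by rw [abs_of_neg hneg] at h1; linarith
      calc r0 * ⌊a / r0⌋ < r0 * (a / r0 - 1) := by
            apply mul_lt_mul_of_neg_left h2 hneg
        _ = a - r0 := by field_simp
        _ ≤ a + 1 := by linarith
  · refine ⟨⌈a / r0⌉, ?_, ?_⟩
    · have := Int.le_ceil (a / r0)
      calc a = (a / r0) * r0 := by field_simp
        _ ≤ (⌈a / r0⌉ : ℝ) * r0 := mul_le_mul_of_nonneg_right this (le_of_lt hpos)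
        _ = r0 * ⌈a / r0⌉ := by ring
    · have h2 : (⌈a / r0⌉ : ℝ) < a / r0 + 1 := Int.ceil_lt_add_one _
      have habs : r0 ≤ 1 := by rw [abs_of_pos hpos] at h1; linarith
      calc r0 * ⌈a / r0⌉ < r0 * (a / r0 + 1) := by
            apply mul_lt_mul_of_pos_left h2 hpos
        _ = a + r0 := by field_simp
        _ ≤ a + 1 := by linarith

theorem srsTau_surj {m : ℕ} (r : Fin (m+1) → ℝ) (hr0 : r 0 ≠ 0) (h1 : |r 0| ≤ 1)
    (v : Fin (m+1) → ℤ) : ∃ z, srsTau r z = v := by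
  set c : ℝ := ∑ i : Fin m, r i.succ * (v i.castSucc : ℝ) with hc
  obtain ⟨k, hk1, hk2⟩ := exists_int_mul_mem hr0 h1 ((-(v (Fin.last m)) : ℝ) - c)
  refine ⟨fun i => if h : (i:ℕ) = 0 then k else v ⟨(i:ℕ)-1, by omega⟩, ?_⟩
  set z : Fin (m+1) → ℤ := fun i => if h : (i:ℕ) = 0 then k else v ⟨(i:ℕ)-1, by omega⟩ with hz
  have hdot : srsDot r z = r 0 * k + c := by
    rw [srsDot, Fin.sum_univ_succ]
    congr 1
  have hfloor : ⌊srsDot r z⌋ = -(v (Fin.last m)) := by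
    rw [Int.floor_eq_iff]
    constructor
    · rw [hdot]; push_cast; linarith
    · rw [hdot]; push_cast; linarith
  funext i
  by_cases h : (i:ℕ) + 1 < m + 1
  · rw [srsTau]
    simp only [dif_pos h]
    rw [hz]
    simp only []
    rw [dif_neg (by omega)]
    exact congrArg v (Fin.ext rfl)
  · rw [srsTau]
    simp only [dif_neg h]
    rw [hfloor, neg_neg]
    congr 1
    exact Fin.ext (by have := i.isLt; simp only [Fin.val_last]; omega)

section Contract

variable {m : ℕ} {r : Fin (m+1) → ℝ} {C ρ : ℝ}
  (hC : 0 < C) (hρ0 : 0 ≤ ρ) (hρ1 : ρ < 1)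
  (hb : ∀ (n : ℕ) (x : Fin (m+1) → ℝ), ‖((companion r) ^ n).mulVec x‖ ≤ C * ρ ^ n * ‖x‖)

include hC hρ0 hρ1 hb

-- single step bound
theorem step_bound (n : ℕ) (z : Fin (m+1) → ℤ) :
    dist (((companion r) ^ (n+1)).mulVec (intToReal z))
      (((companion r) ^ n).mulVec (intToReal (srsTau r z))) ≤ C * ρ ^ n := by
  have h1 : ((companion r) ^ (n+1)).mulVec (intToReal z)
      = ((companion r) ^ n).mulVec ((companion r).mulVec (intToReal z)) := by
    rw [Matrix.mulVec_mulVec, ← pow_succ]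
  rw [h1, mulVec_intToReal, dist_eq_norm, Matrix.mulVec_sub, sub_sub_cancel_left,
    norm_neg]
  calc ‖((companion r) ^ n).mulVec (digitVec (Int.fract (srsDot r z)))‖
      ≤ C * ρ ^ n * ‖(digitVec (Int.fract (srsDot r z)) : Fin (m+1) → ℝ)‖ := hb n _
    _ ≤ C * ρ ^ n * 1 := by
        apply mul_le_mul_of_nonneg_left (norm_digitVec_fract _) (by positivity)
    _ = C * ρ ^ n := by ring

-- telescope bound
theorem telescope_bound : ∀ (k n : ℕ) (z : Fin (m+1) → ℤ),
    dist (((companion r) ^ (n+k)).mulVec (intToReal z))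
      (((companion r) ^ n).mulVec (intToReal ((srsTau r)^[k] z))) ≤ (C / (1-ρ)) * ρ ^ n := by
  have h1ρ : (0:ℝ) < 1 - ρ := by linarith
  intro k
  induction k with
  | zero =>
    intro n z
    simp only [Nat.add_zero, Function.iterate_zero_apply, dist_self]
    positivity
  | succ k ih =>
    intro n z
    have e1 : n + (k+1) = (n+1) + k := by omega
    have e2 : (srsTau r)^[k+1] z = srsTau r ((srsTau r)^[k] z) := Function.iterate_succ_apply' _ _ _
    have tri := dist_triangle (((companion r) ^ (n+(k+1))).mulVec (intToReal z))
      (((companion r) ^ (n+1)).mulVec (intToReal ((srsTau r)^[k] z)))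
      (((companion r) ^ n).mulVec (intToReal ((srsTau r)^[k+1] z)))
    have hA : dist (((companion r) ^ (n+(k+1))).mulVec (intToReal z))
        (((companion r) ^ (n+1)).mulVec (intToReal ((srsTau r)^[k] z)))
          ≤ (C/(1-ρ)) * ρ^(n+1) := by
      rw [e1]
      exact ih (n+1) z
    have hB2 : dist (((companion r) ^ (n+1)).mulVec (intToReal ((srsTau r)^[k] z)))
        (((companion r) ^ n).mulVec (intToReal ((srsTau r)^[k+1] z))) ≤ C * ρ^n := by
      rw [e2]
      exact step_bound hC hρ0 hρ1 hb n _
    have heq : (C/(1-ρ)) * ρ^(n+1) + C * ρ^n = (C/(1-ρ)) * ρ^n := by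
      field_simp
      ring
    linarith [tri]

set_option linter.unusedSectionVars false

theorem exists_tile_point (hr0 : r 0 ≠ 0) (x : Fin (m+1) → ℤ) (n₀ : ℕ)
    (z : Fin (m+1) → ℤ) (hz : (srsTau r)^[n₀] z = x) :
    ∃ t ∈ srsTile r x,
      dist (((companion r) ^ n₀).mulVec (intToReal z)) t ≤ (C / (1-ρ)) * ρ ^ n₀ := by
  have habs : |r 0| ≤ 1 := abs_r0_le_one r ⟨C, hC, ρ, hρ0, hρ1, hb⟩
  have hpre : ∀ v : Fin (m+1) → ℤ, ∃ w, srsTau r w = v := srsTau_surj r hr0 habs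
  set pre : (Fin (m+1) → ℤ) → (Fin (m+1) → ℤ) := fun v => (hpre v).choose with hpredef
  have hpre' : ∀ v, srsTau r (pre v) = v := fun v => (hpre v).choose_spec
  set c : ℕ → (Fin (m+1) → ℤ) := fun j => pre^[j] z with hcdef
  have hc : ∀ j, (srsTau r)^[j] (c j) = z := by
    intro j
    induction j with
    | zero => rfl
    | succ j ih =>
      have h1 : c (j+1) = pre (c j) := Function.iterate_succ_apply' pre j z
      rw [h1, Function.iterate_succ_apply, hpre', ih]
  set a : ℕ → (Fin (m+1) → ℝ) :=
    fun j => ((companion r) ^ (n₀+j)).mulVec (intToReal (c j)) with hadef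
  have hstep : ∀ j, dist (a j) (a (j+1)) ≤ (C * ρ ^ n₀) * ρ ^ j := by
    intro j
    rw [dist_comm]
    have h1 : srsTau r (c (j+1)) = c j := by
      rw [show c (j+1) = pre (c j) from Function.iterate_succ_apply' pre j z, hpre']
    have h2 := step_bound hC hρ0 hρ1 hb (n₀+j) (c (j+1))
    rw [h1] at h2
    calc dist (a (j+1)) (a j) ≤ C * ρ ^ (n₀+j) := h2
      _ = (C * ρ ^ n₀) * ρ ^ j := by rw [pow_add]; ring
  have hcauchy : CauchySeq a := cauchySeq_of_le_geometric ρ (C * ρ ^ n₀) hρ1 hstep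
  obtain ⟨t, hta⟩ := cauchySeq_tendsto_of_complete hcauchy
  have hd0 : dist (a 0) t ≤ (C / (1-ρ)) * ρ ^ n₀ := by
    have := dist_le_of_le_geometric_of_tendsto₀ ρ (C * ρ ^ n₀) hρ1 hstep hta
    calc dist (a 0) t ≤ (C * ρ ^ n₀) / (1 - ρ) := this
      _ = (C / (1-ρ)) * ρ ^ n₀ := by ring
  refine ⟨t, ?_, ?_⟩
  · refine ⟨fun k => if k ≤ n₀ then (srsTau r)^[n₀ - k] z else c (k - n₀), ?_, ?_⟩
    · intro k
      show (srsTau r)^[k] (if k ≤ n₀ then (srsTau r)^[n₀ - k] z else c (k - n₀)) = x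
      by_cases h : k ≤ n₀
      · rw [if_pos h, ← Function.iterate_add_apply, show k + (n₀ - k) = n₀ by omega, hz]
      · rw [if_neg h]
        have e : (srsTau r)^[k] (c (k - n₀))
            = (srsTau r)^[n₀] ((srsTau r)^[k-n₀] (c (k - n₀))) := by
          rw [← Function.iterate_add_apply]
          congr 1
          omega
        rw [e, hc, hz]
    · apply Tendsto.congr' _ (hta.comp (tendsto_sub_atTop_nat n₀))
      filter_upwards [eventually_ge_atTop n₀] with k hk
      by_cases h : k ≤ n₀
      · have hkn : k = n₀ := le_antisymm h hk
        subst hkn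
        simp only [Function.comp_apply, Nat.sub_self, if_pos le_rfl]
        rfl
      · have e : n₀ + (k - n₀) = k := by omega
        simp only [Function.comp_apply, if_neg h, hadef, e]
  · have ha0 : a 0 = ((companion r) ^ n₀).mulVec (intToReal z) := by
      simp only [hadef, Nat.add_zero]
      rfl
    rw [← ha0]
    exact hd0

-- membership gives approximations at every level
theorem tile_approx {x : Fin (m+1) → ℤ} {t : Fin (m+1) → ℝ} (ht : t ∈ srsTile r x)
    (n : ℕ) {ε : ℝ} (hε : 0 < ε) :
    ∃ z, (srsTau r)^[n] z = x ∧
      dist (((companion r) ^ n).mulVec (intToReal z)) t ≤ (C / (1-ρ)) * ρ ^ n + ε := by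
  obtain ⟨w, hw1, hw2⟩ := ht
  obtain ⟨k, hk1, hk2⟩ := ((hw2.eventually (Metric.ball_mem_nhds t hε)).and
    (eventually_ge_atTop n)).exists
  refine ⟨(srsTau r)^[k - n] (w k), ?_, ?_⟩
  · rw [← Function.iterate_add_apply, show n + (k - n) = k by omega, hw1]
  · have htel := telescope_bound hC hρ0 hρ1 hb (k - n) n (w k)
    rw [show n + (k - n) = k by omega] at htel
    calc dist (((companion r) ^ n).mulVec (intToReal ((srsTau r)^[k - n] (w k)))) t
        ≤ dist (((companion r) ^ n).mulVec (intToReal ((srsTau r)^[k - n] (w k))))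
            (((companion r) ^ k).mulVec (intToReal (w k)))
          + dist (((companion r) ^ k).mulVec (intToReal (w k))) t := dist_triangle _ _ _
      _ ≤ (C / (1-ρ)) * ρ ^ n + ε := by
          apply add_le_add
          · rw [dist_comm]; exact htel
          · exact le_of_lt (Metric.mem_ball.mp hk1)

-- criterion for membership, with an arbitrary constant B'
theorem tile_of_approx {x : Fin (m+1) → ℤ} {t : Fin (m+1) → ℝ} (B' : ℝ)
    (h : ∀ n : ℕ, ∃ z, (srsTau r)^[n] z = x ∧
      dist (((companion r) ^ n).mulVec (intToReal z)) t ≤ B' * ρ ^ n + 1/(n+1)) :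
    t ∈ srsTile r x := by
  choose z hz1 hz2 using h
  refine ⟨z, hz1, ?_⟩
  rw [tendsto_iff_dist_tendsto_zero]
  apply squeeze_zero (fun n => dist_nonneg) hz2
  have h1 : Tendsto (fun n : ℕ => B' * ρ ^ n) atTop (nhds 0) := by
    have := (tendsto_pow_atTop_nhds_zero_of_lt_one hρ0 hρ1).const_mul B'
    simpa using this
  have h2 : Tendsto (fun n : ℕ => 1/((n:ℝ)+1)) atTop (nhds 0) :=
    tendsto_one_div_add_atTop_nhds_zero_nat
  simpa using h1.add h2

theorem tile_closed (x : Fin (m+1) → ℤ) : IsClosed (srsTile r x) := by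
  have hsub : closure (srsTile r x) ⊆ srsTile r x := by
    intro t ht
    apply tile_of_approx hC hρ0 hρ1 hb (C / (1-ρ))
    intro n
    have hpos : (0:ℝ) < 1/(2*((n:ℝ)+1)) := by positivity
    obtain ⟨s, hs, hds⟩ := Metric.mem_closure_iff.mp ht _ hpos
    obtain ⟨z, hz1, hz2⟩ := tile_approx hC hρ0 hρ1 hb hs n hpos
    refine ⟨z, hz1, ?_⟩
    have harith : 1/(2*((n:ℝ)+1)) + 1/(2*((n:ℝ)+1)) = 1/((n:ℝ)+1) := by
      rw [← add_div]
      rw [show (2:ℝ)*((n:ℝ)+1) = ((n:ℝ)+1)*2 by ring, ← div_div]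
      rw [div_right_comm]
      norm_num
    calc dist (((companion r) ^ n).mulVec (intToReal z)) t
        ≤ dist (((companion r) ^ n).mulVec (intToReal z)) s + dist s t := dist_triangle _ _ _
      _ ≤ ((C / (1-ρ)) * ρ ^ n + 1/(2*((n:ℝ)+1))) + 1/(2*((n:ℝ)+1)) := by
          apply add_le_add hz2
          rw [dist_comm]
          exact le_of_lt hds
      _ = (C / (1-ρ)) * ρ ^ n + 1/((n:ℝ)+1) := by rw [add_assoc, harith]
  exact isClosed_of_closure_subset hsub

theorem tile_subset_ball (x : Fin (m+1) → ℤ) :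
    srsTile r x ⊆ Metric.closedBall (intToReal x) (C / (1-ρ)) := by
  intro t ht
  rw [Metric.mem_closedBall, dist_comm]
  apply le_of_forall_pos_le_add
  intro ε hε
  obtain ⟨z, hz1, hz2⟩ := tile_approx hC hρ0 hρ1 hb ht 0 hε
  have hz : z = x := hz1
  rw [hz, pow_zero, Matrix.one_mulVec, pow_zero, mul_one] at hz2
  exact hz2

theorem tile_compact (x : Fin (m+1) → ℤ) : IsCompact (srsTile r x) :=
  (isCompact_closedBall (intToReal x) (C / (1-ρ))).of_isClosed_subset
    (tile_closed hC hρ0 hρ1 hb x) (tile_subset_ball hC hρ0 hρ1 hb x)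

theorem tile_nonempty (hr0 : r 0 ≠ 0) (x : Fin (m+1) → ℤ) : (srsTile r x).Nonempty := by
  obtain ⟨t, ht, -⟩ := exists_tile_point hC hρ0 hρ1 hb hr0 x 0 x rfl
  exact ⟨t, ht⟩

theorem tile_hausdorff (hr0 : r 0 ≠ 0) (x : Fin (m+1) → ℤ) :
    Tendsto (fun n : ℕ => Metric.hausdorffDist
        ((fun z => ((companion r) ^ n).mulVec (intToReal z)) ''
          {z : Fin (m+1) → ℤ | (srsTau r)^[n] z = x})
        (srsTile r x)) atTop (nhds 0) := by
  have hub : ∀ n : ℕ, Metric.hausdorffDist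
      ((fun z => ((companion r) ^ n).mulVec (intToReal z)) ''
        {z : Fin (m+1) → ℤ | (srsTau r)^[n] z = x})
      (srsTile r x) ≤ (C / (1-ρ)) * ρ ^ n := by
    intro n
    have h1ρ : (0:ℝ) < 1 - ρ := by linarith
    apply Metric.hausdorffDist_le_of_infDist (by positivity)
    · rintro p ⟨z, hz, rfl⟩
      obtain ⟨t, ht, hd⟩ := exists_tile_point hC hρ0 hρ1 hb hr0 x n z hz
      exact le_trans (Metric.infDist_le_dist_of_mem ht) hd
    · intro t ht
      apply le_of_forall_pos_le_add
      intro ε hε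
      obtain ⟨z, hz1, hz2⟩ := tile_approx hC hρ0 hρ1 hb ht n hε
      calc Metric.infDist t ((fun z => ((companion r) ^ n).mulVec (intToReal z)) ''
            {z : Fin (m+1) → ℤ | (srsTau r)^[n] z = x})
          ≤ dist t (((companion r) ^ n).mulVec (intToReal z)) :=
            Metric.infDist_le_dist_of_mem (Set.mem_image_of_mem _ hz1)
        _ = dist (((companion r) ^ n).mulVec (intToReal z)) t := dist_comm _ _
        _ ≤ (C / (1-ρ)) * ρ ^ n + ε := hz2
  apply squeeze_zero (fun n => Metric.hausdorffDist_nonneg) hub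
  have := (tendsto_pow_atTop_nhds_zero_of_lt_one hρ0 hρ1).const_mul (C / (1-ρ))
  simpa using this

-- easy direction of the set equation
theorem tile_superset {x y : Fin (m+1) → ℤ} (hy : srsTau r y = x) {s : Fin (m+1) → ℝ}
    (hs : s ∈ srsTile r y) : (companion r).mulVec s ∈ srsTile r x := by
  obtain ⟨u, hu1, hu2⟩ := hs
  refine ⟨fun n => Nat.rec x (fun k _ => u k) n, ?_, ?_⟩
  · intro n
    cases n with
    | zero => rfl
    | succ k =>
      show (srsTau r)^[k+1] (u k) = x
      rw [Function.iterate_succ_apply', hu1, hy]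
  · have hcont := continuous_mulVec (companion r)
    have h2 : Tendsto (fun k => (companion r).mulVec (((companion r) ^ k).mulVec
        (intToReal (u k)))) atTop (nhds ((companion r).mulVec s)) :=
      ((hcont.tendsto s).comp hu2)
    apply Tendsto.congr' _ (h2.comp (tendsto_sub_atTop_nat 1))
    filter_upwards [eventually_ge_atTop 1] with n hn
    obtain ⟨k, rfl⟩ := Nat.exists_eq_succ_of_ne_zero (by omega : n ≠ 0)
    show (companion r).mulVec (((companion r) ^ (k+1-1)).mulVec (intToReal (u (k+1-1))))
      = ((companion r) ^ (k+1)).mulVec (intToReal (u k))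
    rw [Nat.succ_sub_one, Matrix.mulVec_mulVec, ← pow_succ']

-- pigeonhole for sequences in a finite set
theorem exists_frequently_eq {α : Type*} {S : Set α} (hS : S.Finite) (w : ℕ → α)
    (hw : ∀ n, w n ∈ S) : ∃ y ∈ S, ∃ᶠ n in atTop, w n = y := by
  by_contra h
  push_neg at h
  have h2 : ∀ y ∈ S, ∀ᶠ n in atTop, w n ≠ y := by
    intro y hy
    have := h y hy
    exact this
  obtain ⟨n, hn⟩ := ((Filter.eventually_all_finite hS).mpr h2).exists
  exact hn (w n) (hw n) rfl

-- finiteness of the preimage set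
theorem preimage_finite (hr0 : r 0 ≠ 0) (x : Fin (m+1) → ℤ) :
    {y : Fin (m+1) → ℤ | srsTau r y = x}.Finite := by
  set S := {y : Fin (m+1) → ℤ | srsTau r y = x} with hS
  set c : ℝ := ∑ i : Fin m, r i.succ * (x i.castSucc : ℝ) with hc
  set R : ℝ := (|(x (Fin.last m) : ℝ)| + 1 + |c|) / |r 0| with hR
  have habs0 : (0:ℝ) < |r 0| := abs_pos.mpr hr0
  have hbnd : ∀ y ∈ S, |(y 0 : ℝ)| ≤ R := by
    intro y hy
    have hy' : srsTau r y = x := hy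
    have hlast : -⌊srsDot r y⌋ = x (Fin.last m) := by
      have := congrFun hy' (Fin.last m)
      rwa [srsTau, dif_neg (by simp)] at this
    have hcoord : ∀ i : Fin m, y i.succ = x i.castSucc := by
      intro i
      have := congrFun hy' i.castSucc
      rwa [srsTau, dif_pos (by simpa using i.isLt)] at this
    have hdot : srsDot r y = r 0 * (y 0 : ℝ) + c := by
      rw [srsDot, Fin.sum_univ_succ, hc]
      congr 1
      apply Finset.sum_congr rfl
      intro i _
      rw [hcoord i]
    have hfl : (⌊srsDot r y⌋ : ℝ) ≤ srsDot r y ∧ srsDot r y < ⌊srsDot r y⌋ + 1 :=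
      ⟨Int.floor_le _, Int.lt_floor_add_one _⟩
    have hfl2 : (⌊srsDot r y⌋ : ℝ) = -(x (Fin.last m) : ℝ) := by
      rw [show ⌊srsDot r y⌋ = -(x (Fin.last m)) by omega]
      push_cast
      ring
    have habs : |srsDot r y| ≤ |(x (Fin.last m) : ℝ)| + 1 := by
      rw [abs_le]
      constructor
      · have := hfl.1; rw [hfl2] at this
        have h4 := le_abs_self ((x (Fin.last m) : ℝ))
        linarith
      · have := hfl.2; rw [hfl2] at this
        have h4 := neg_le_abs ((x (Fin.last m) : ℝ))
        linarith
    have h5 : |r 0 * (y 0 : ℝ)| ≤ |(x (Fin.last m) : ℝ)| + 1 + |c| := by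
      have : r 0 * (y 0 : ℝ) = srsDot r y - c := by rw [hdot]; ring
      rw [this]
      calc |srsDot r y - c| ≤ |srsDot r y| + |c| := abs_sub _ _
        _ ≤ |(x (Fin.last m) : ℝ)| + 1 + |c| := by linarith
    rw [hR, le_div_iff₀ habs0]
    calc |(y 0 : ℝ)| * |r 0| = |r 0 * (y 0 : ℝ)| := by rw [abs_mul]; ring
      _ ≤ _ := h5
  set N : ℤ := ⌈R⌉ with hN
  apply Set.Finite.of_finite_image (f := fun y => y 0)
  · apply (Set.finite_Icc (-N) N).subset
    rintro k ⟨y, hy, rfl⟩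
    have h6 := hbnd y hy
    have h7 : |(y 0 : ℝ)| ≤ (N : ℝ) := le_trans h6 (Int.le_ceil R)
    rw [abs_le] at h7
    constructor
    · exact_mod_cast h7.1
    · exact_mod_cast h7.2
  · intro y hy y' hy' h0
    have hyc : ∀ i : Fin m, y i.succ = x i.castSucc := by
      intro i
      have := congrFun (hy : srsTau r y = x) i.castSucc
      rwa [srsTau, dif_pos (by simpa using i.isLt)] at this
    have hyc' : ∀ i : Fin m, y' i.succ = x i.castSucc := by
      intro i
      have := congrFun (hy' : srsTau r y' = x) i.castSucc
      rwa [srsTau, dif_pos (by simpa using i.isLt)] at this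
    funext i
    induction i using Fin.cases with
    | zero => exact h0
    | succ j => rw [hyc j, hyc' j]

-- hard direction of the set equation
theorem tile_subset_union (hr0 : r 0 ≠ 0) (x : Fin (m+1) → ℤ) {t : Fin (m+1) → ℝ}
    (ht : t ∈ srsTile r x) :
    ∃ y, srsTau r y = x ∧ t ∈ (companion r).mulVec '' srsTile r y := by
  obtain ⟨z, hz1, hz2⟩ := ht
  set w : ℕ → (Fin (m+1) → ℤ) := fun n => (srsTau r)^[n] (z (n+1)) with hwdef
  have hw : ∀ n, srsTau r (w n) = x := by
    intro n
    rw [hwdef]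
    show srsTau r ((srsTau r)^[n] (z (n+1))) = x
    rw [← Function.iterate_succ_apply' (srsTau r) n (z (n+1))]
    exact hz1 (n+1)
  obtain ⟨y, hyS, hfreq⟩ := exists_frequently_eq hC hρ0 hρ1 hb (preimage_finite hC hρ0 hρ1 hb hr0 x) w hw
  have hy : srsTau r y = x := hyS
  -- inverse matrix
  have hdetu : IsUnit (companion r).det := by
    rw [isUnit_iff_ne_zero]
    intro hdz
    rw [← abs_eq_zero, abs_det_companion] at hdz
    exact hr0 (abs_eq_zero.mp hdz)
  set Nv : Matrix (Fin (m+1)) (Fin (m+1)) ℝ := (companion r)⁻¹ with hNv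
  set L : ℝ := ∑ i, ∑ j, |Nv i j| with hL
  have hL0 : 0 ≤ L := by positivity
  have hNM : ∀ v : Fin (m+1) → ℝ, Nv.mulVec ((companion r).mulVec v) = v := by
    intro v
    rw [Matrix.mulVec_mulVec, Matrix.nonsing_inv_mul _ hdetu, Matrix.one_mulVec]
  have hMN : (companion r).mulVec (Nv.mulVec t) = t := by
    rw [Matrix.mulVec_mulVec, Matrix.mul_nonsing_inv _ hdetu, Matrix.one_mulVec]
  set s : Fin (m+1) → ℝ := Nv.mulVec t with hs
  have hLip : ∀ a b : Fin (m+1) → ℝ, dist (Nv.mulVec a) (Nv.mulVec b) ≤ L * dist a b := by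
    intro a b
    rw [dist_eq_norm, dist_eq_norm, ← Matrix.mulVec_sub]
    exact mulVec_norm_le Nv (a - b)
  refine ⟨y, hy, s, ?_, hMN⟩
  apply tile_of_approx hC hρ0 hρ1 hb (L * (C / (1-ρ)) * ρ)
  intro n
  set δ : ℝ := (1/(L+1)) * (1/((n:ℝ)+1)) with hδ
  have hδ0 : 0 < δ := by positivity
  have h2 : ∀ᶠ j in atTop, dist (((companion r) ^ j).mulVec (intToReal (z j))) t ≤ δ := by
    have := hz2.eventually (Metric.closedBall_mem_nhds t hδ0)
    filter_upwards [this] with j hj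
    exact Metric.mem_closedBall.mp hj
  have h3 : ∀ᶠ k in atTop,
      dist (((companion r) ^ (k+1)).mulVec (intToReal (z (k+1)))) t ≤ δ :=
    (tendsto_add_atTop_nat 1).eventually h2
  obtain ⟨k, hkw, hkn, hkd⟩ := (hfreq.and_eventually ((eventually_ge_atTop n).and h3)).exists
  refine ⟨(srsTau r)^[k - n] (z (k+1)), ?_, ?_⟩
  · rw [← Function.iterate_add_apply, show n + (k - n) = k by omega]
    exact hkw
  · set u := (srsTau r)^[k - n] (z (k+1)) with hu
    have htel := telescope_bound hC hρ0 hρ1 hb (k - n) (n+1) (z (k+1))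
    rw [show (n+1) + (k - n) = k + 1 by omega] at htel
    have hd1 : dist (((companion r) ^ (n+1)).mulVec (intToReal u)) t
        ≤ (C / (1-ρ)) * ρ ^ (n+1) + δ := by
      calc dist (((companion r) ^ (n+1)).mulVec (intToReal u)) t
          ≤ dist (((companion r) ^ (n+1)).mulVec (intToReal u))
              (((companion r) ^ (k+1)).mulVec (intToReal (z (k+1))))
            + dist (((companion r) ^ (k+1)).mulVec (intToReal (z (k+1)))) t :=
            dist_triangle _ _ _
        _ ≤ (C / (1-ρ)) * ρ ^ (n+1) + δ := add_le_add (by rw [dist_comm]; exact htel) hkd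
    have hrepr : ((companion r) ^ n).mulVec (intToReal u)
        = Nv.mulVec (((companion r) ^ (n+1)).mulVec (intToReal u)) := by
      rw [show ((companion r) ^ (n+1)).mulVec (intToReal u)
          = (companion r).mulVec (((companion r) ^ n).mulVec (intToReal u)) by
        rw [Matrix.mulVec_mulVec, ← pow_succ'], hNM]
    calc dist (((companion r) ^ n).mulVec (intToReal u)) s
        = dist (Nv.mulVec (((companion r) ^ (n+1)).mulVec (intToReal u))) (Nv.mulVec t) := by
          rw [hrepr, hs]
      _ ≤ L * dist (((companion r) ^ (n+1)).mulVec (intToReal u)) t := hLip _ _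
      _ ≤ L * ((C / (1-ρ)) * ρ ^ (n+1) + δ) := by
          apply mul_le_mul_of_nonneg_left hd1 hL0
      _ = (L * (C / (1-ρ)) * ρ) * ρ ^ n + L * δ := by rw [pow_succ]; ring
      _ ≤ (L * (C / (1-ρ)) * ρ) * ρ ^ n + 1/((n:ℝ)+1) := by
          apply add_le_add le_rfl
          rw [hδ]
          rw [show L * ((1/(L+1)) * (1/((n:ℝ)+1))) = (L/(L+1)) * (1/((n:ℝ)+1)) by ring]
          apply mul_le_of_le_one_left (by positivity)
          rw [div_le_one (by linarith)]
          linarith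

end Contract

/-- the SRS tile T_r(x) is the Hausdorff limit of M_r^n τ_r^{-n}(x);
it is a nonempty compact set satisfying T_r(x) = ⋃_{y ∈ τ_r^{-1}(x)} M_r T_r(y). -/
theorem srsTile_basic_properties (d : ℕ) (hd : 0 < d) (r : Fin d → ℝ)
    (hr0 : r ⟨0, hd⟩ ≠ 0) (hcontr : srsContractive r) (x : Fin d → ℤ) :
    (srsTile r x).Nonempty ∧ IsCompact (srsTile r x) ∧
    Tendsto (fun n : ℕ => Metric.hausdorffDist
        ((fun z => ((companion r) ^ n).mulVec (intToReal z)) ''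
          {z : Fin d → ℤ | (srsTau r)^[n] z = x})
        (srsTile r x)) atTop (nhds 0) ∧
    srsTile r x =
      ⋃ y ∈ {y : Fin d → ℤ | srsTau r y = x}, (companion r).mulVec '' srsTile r y := by
  obtain ⟨m, rfl⟩ : ∃ m, d = m + 1 := ⟨d - 1, by omega⟩
  have hr0' : r 0 ≠ 0 := by
    rwa [show ((⟨0, hd⟩ : Fin (m+1)) : Fin (m+1)) = 0 from Fin.ext (by simp)] at hr0
  obtain ⟨C, hC, ρ, hρ0, hρ1, hb⟩ := hcontr
  refine ⟨tile_nonempty hC hρ0 hρ1 hb hr0' x, tile_compact hC hρ0 hρ1 hb x,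
    tile_hausdorff hC hρ0 hρ1 hb hr0' x, ?_⟩
  apply Set.eq_of_subset_of_subset
  · intro t ht
    obtain ⟨y, hy, htm⟩ := tile_subset_union hC hρ0 hρ1 hb hr0' x ht
    exact Set.mem_biUnion hy htm
  · intro t ht
    simp only [Set.mem_iUnion] at ht
    obtain ⟨y, hy, s, hs, rfl⟩ := ht
    exact tile_superset hC hρ0 hρ1 hb hy hs
end
end

section
/- Let r ∈ int(D_d) be reduced and x ∈ ℤ^d. Then 0 ∈ T_r(x) if and only if x is purely periodic under τ_r, i.e., τ_r^p(x) = x for some p ≥ 1. Moreover, there are only finitely many purely periodic points. -/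
open Matrix Filter

noncomputable section

lemma srs_key {d : ℕ} (r : Fin d → ℝ) (z : Fin d → ℤ) :
    intToReal (srsTau r z) =
      (companion r).mulVec (intToReal z) + digitVec (Int.fract (srsDot r z)) := by
  funext i
  simp only [intToReal, srsTau, companion, digitVec, Matrix.mulVec, dotProduct,
    Pi.add_apply]
  by_cases h : (i : ℕ) + 1 < d
  · rw [dif_pos h]
    simp only [if_pos h, if_neg (show ¬((i:ℕ)+1 = d) by omega)]
    have : ∀ j : Fin d, (if (j : ℕ) = (i : ℕ) + 1 then (1:ℝ) else 0) * (z j : ℝ)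
        = if j = (⟨(i:ℕ)+1, h⟩ : Fin d) then (z ⟨(i:ℕ)+1, h⟩ : ℝ) else 0 := by
      intro j
      by_cases hj : j = (⟨(i:ℕ)+1, h⟩ : Fin d)
      · subst hj; simp
      · rw [if_neg (by simpa [Fin.ext_iff] using hj), if_neg hj, zero_mul]
    simp [this]
  · rw [dif_neg h]
    simp only [if_neg h, if_pos (show (i:ℕ)+1 = d by omega)]
    have : ∀ j : Fin d, (-r j) * (z j : ℝ) = -(r j * (z j : ℝ)) := fun j => by ring
    simp only [this, Finset.sum_neg_distrib]
    rw [Int.fract]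
    push_cast
    simp only [srsDot]
    ring

lemma norm_digitVec {d : ℕ} (v : ℝ) : ‖(digitVec v : Fin d → ℝ)‖ ≤ |v| := by
  refine (pi_norm_le_iff_of_nonneg (abs_nonneg v)).2 fun i => ?_
  simp only [digitVec]
  split <;> simp [Real.norm_eq_abs, abs_nonneg]

lemma companion_mulVec_injective {d : ℕ} (hd : 0 < d) (r : Fin d → ℝ)
    (hr0 : r ⟨0, hd⟩ ≠ 0) : Function.Injective (companion r).mulVec := by
  suffices h : ∀ v : Fin d → ℝ, (companion r).mulVec v = 0 → v = 0 by
    intro a b hab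
    have := h (a - b) (by rw [Matrix.mulVec_sub, hab, sub_self])
    exact sub_eq_zero.mp this
  intro v hv
  have hshift : ∀ j : Fin d, 0 < (j : ℕ) → v j = 0 := by
    intro j hj
    have hjd : (j : ℕ) < d := j.isLt
    have hi : (j : ℕ) - 1 < d := lt_of_le_of_lt (Nat.sub_le _ _) j.isLt
    set i : Fin d := ⟨(j : ℕ) - 1, hi⟩ with hidef
    have hcond : (i : ℕ) + 1 < d := by show (j : ℕ) - 1 + 1 < d; omega
    have h0 : (companion r).mulVec v i = 0 := by rw [hv]; rfl
    have : ∀ k : Fin d, companion r i k * v k = if k = j then v j else 0 := by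
      intro k
      simp only [companion, if_pos hcond]
      by_cases hk : k = j
      · subst hk; rw [if_pos (show (k : ℕ) = (i : ℕ) + 1 by show (k:ℕ) = (k:ℕ)-1+1; omega)]
        simp
      · refine (if_neg (fun hc : (k : ℕ) = (i : ℕ) + 1 => hk ?_)).symm ▸ ?_
        · exact Fin.ext (by have hc' : (k : ℕ) = (j : ℕ) - 1 + 1 := hc; omega)
        · rw [zero_mul, if_neg hk]
    rw [Matrix.mulVec, dotProduct] at h0
    simpa [this] using h0
  have hlast : v ⟨0, hd⟩ = 0 := by
    set l : Fin d := ⟨d - 1, Nat.sub_lt hd one_pos⟩ with hldef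
    have hcond : ¬((l : ℕ) + 1 < d) := by show ¬(d - 1 + 1 < d); omega
    have h0 : (companion r).mulVec v l = 0 := by rw [hv]; rfl
    rw [Matrix.mulVec, dotProduct] at h0
    have : ∀ k : Fin d, companion r l k * v k
        = if k = (⟨0, hd⟩ : Fin d) then -r ⟨0, hd⟩ * v ⟨0, hd⟩ else 0 := by
      intro k
      simp only [companion, if_neg hcond]
      by_cases hk : k = (⟨0, hd⟩ : Fin d)
      · subst hk; simp
      · rw [if_neg hk, hshift k (by simp only [Fin.ext_iff] at hk; omega), mul_zero]
    rw [Finset.sum_congr rfl fun k _ => this k] at h0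
    simp only [Finset.sum_ite_eq', Finset.mem_univ, if_true] at h0
    have := mul_eq_zero.mp h0
    rcases this with h | h
    · exact absurd (neg_eq_zero.mp h) hr0
    · exact h
  funext k
  by_cases hk : (k : ℕ) = 0
  · have : k = ⟨0, hd⟩ := Fin.ext hk
    rw [this, hlast]; rfl
  · exact (hshift k (Nat.pos_of_ne_zero hk)).trans rfl

lemma srs_geom_le {ρ : ℝ} (hρ0 : 0 ≤ ρ) (hρ1 : ρ < 1) (n : ℕ) :
    ∑ j ∈ Finset.range n, ρ ^ j ≤ (1 - ρ)⁻¹ := by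
  have h1 : (0:ℝ) < 1 - ρ := by linarith
  have h2 := geom_sum_mul ρ n
  have hpn : (0:ℝ) ≤ ρ ^ n := pow_nonneg hρ0 n
  rw [inv_eq_one_div, le_div_iff₀ h1]
  nlinarith

lemma srs_err {d : ℕ} (r : Fin d → ℝ) {C ρ : ℝ} (hC : 0 < C) (hρ0 : 0 ≤ ρ) (hρ1 : ρ < 1)
    (hbound : ∀ (n : ℕ) (x : Fin d → ℝ),
      ‖((companion r) ^ n).mulVec x‖ ≤ C * ρ ^ n * ‖x‖) (n : ℕ) (z : Fin d → ℤ) :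
    ‖intToReal ((srsTau r)^[n] z) - ((companion r) ^ n).mulVec (intToReal z)‖
      ≤ C * (1 - ρ)⁻¹ := by
  have main : ∀ (n : ℕ) (z : Fin d → ℤ),
      ‖intToReal ((srsTau r)^[n] z) - ((companion r) ^ n).mulVec (intToReal z)‖
        ≤ C * ∑ j ∈ Finset.range n, ρ ^ j := by
    intro n
    induction n with
    | zero => intro z; simp [Matrix.one_mulVec]
    | succ n ih =>
      intro z
      have hf : |Int.fract (srsDot r z)| ≤ 1 := by
        have h1 := Int.fract_nonneg (srsDot r z)
        have h2 := Int.fract_lt_one (srsDot r z)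
        rw [abs_of_nonneg h1]; linarith
      rw [Function.iterate_succ_apply]
      have heq : intToReal ((srsTau r)^[n] (srsTau r z))
            - ((companion r) ^ (n+1)).mulVec (intToReal z)
          = (intToReal ((srsTau r)^[n] (srsTau r z))
              - ((companion r) ^ n).mulVec (intToReal (srsTau r z)))
            + ((companion r) ^ n).mulVec (digitVec (Int.fract (srsDot r z))) := by
        rw [srs_key r z, Matrix.mulVec_add, pow_succ, ← Matrix.mulVec_mulVec]
        abel
      rw [heq, Finset.sum_range_succ, mul_add]
      refine (norm_add_le _ _).trans (add_le_add (ih _) ?_)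
      calc ‖((companion r) ^ n).mulVec (digitVec (Int.fract (srsDot r z)))‖
          ≤ C * ρ ^ n * ‖(digitVec (Int.fract (srsDot r z)) : Fin d → ℝ)‖ := hbound n _
        _ ≤ C * ρ ^ n * 1 :=
            mul_le_mul_of_nonneg_left ((norm_digitVec _).trans hf) (by positivity)
        _ = C * ρ ^ n := mul_one _
  exact (main n z).trans (mul_le_mul_of_nonneg_left (srs_geom_le hρ0 hρ1 n) hC.le)

lemma srs_finite_bdd {d : ℕ} (B : ℝ) : {z : Fin d → ℤ | ‖intToReal z‖ ≤ B}.Finite := by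
  refine Set.Finite.subset (Set.Finite.pi (fun i : Fin d => Set.finite_Icc (-⌈B⌉) ⌈B⌉)) ?_
  intro z hz
  simp only [Set.mem_pi, Set.mem_univ, forall_true_left, Set.mem_Icc]
  intro i
  have h1 : |(z i : ℝ)| ≤ B := by
    have h2 := norm_le_pi_norm (intToReal z) i
    simpa [intToReal, Real.norm_eq_abs] using h2.trans hz
  constructor
  · have h3 : (-(⌈B⌉:ℝ)) ≤ (z i : ℝ) :=
      le_trans (neg_le_neg (Int.le_ceil B)) (abs_le.mp h1).1
    exact_mod_cast h3
  · exact_mod_cast ((abs_le.mp h1).2.trans (Int.le_ceil B))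


/-- 0 ∈ T_r(x) iff x is purely periodic under τ_r; moreover there
are only finitely many purely periodic points. -/
theorem zero_mem_srsTile_iff_purely_periodic (d : ℕ) (hd : 0 < d) (r : Fin d → ℝ)
    (hr0 : r ⟨0, hd⟩ ≠ 0) (hcontr : srsContractive r) (x : Fin d → ℤ) :
    ((0 : Fin d → ℝ) ∈ srsTile r x ↔ ∃ p : ℕ, 1 ≤ p ∧ (srsTau r)^[p] x = x) ∧
    {z : Fin d → ℤ | ∃ p : ℕ, 1 ≤ p ∧ (srsTau r)^[p] z = z}.Finite := by
  obtain ⟨C, hC, ρ, hρ0, hρ1, hbound⟩ := hcontr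
  have h1ρ : (0:ℝ) < 1 - ρ := by linarith
  set B : ℝ := C * (1 - ρ)⁻¹ with hB
  have hB0 : 0 ≤ B := by positivity
  have herr := srs_err r hC hρ0 hρ1 hbound
  constructor
  · constructor
    · -- forward: 0 ∈ tile → periodic
      rintro ⟨z, hz, hlim⟩
      have hinj := companion_mulVec_injective hd r hr0
      have hu : IsUnit (companion r) := Matrix.mulVec_injective_iff_isUnit.mp hinj
      have hw : ∀ k : ℕ, ∃ w : Fin d → ℤ,
          (srsTau r)^[k] w = x ∧ ‖intToReal w‖ ≤ B + 1 := by
        intro k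
        have huk : IsUnit ((companion r) ^ k) := hu.pow k
        have hdet : IsUnit ((companion r) ^ k).det := (Matrix.isUnit_iff_isUnit_det _).mp huk
        have hNinv : ((companion r) ^ k)⁻¹ * ((companion r) ^ k) = 1 :=
          Matrix.nonsing_inv_mul _ hdet
        have hcont : Continuous (fun y : Fin d → ℝ => ((companion r) ^ k)⁻¹.mulVec y) := by
          have h := LinearMap.continuous_of_finiteDimensional (((companion r) ^ k)⁻¹.mulVecLin)
          simpa [Matrix.coe_mulVecLin] using h
        have hlim2 : Tendsto
            (fun n => ((companion r) ^ k)⁻¹.mulVec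
              (((companion r) ^ n).mulVec (intToReal (z n)))) atTop (nhds 0) := by
          have h := (hcont.tendsto 0).comp hlim
          rw [Matrix.mulVec_zero] at h
          exact h
        have hev : ∀ᶠ n in atTop, ‖((companion r) ^ k)⁻¹.mulVec
            (((companion r) ^ n).mulVec (intToReal (z n)))‖ < 1 := by
          have hnorm := hlim2.norm
          rw [norm_zero] at hnorm
          exact hnorm.eventually_lt_const one_pos
        obtain ⟨n, hn1, hnk⟩ := (hev.and (eventually_ge_atTop k)).exists
        refine ⟨(srsTau r)^[n - k] (z n), ?_, ?_⟩
        · rw [← Function.iterate_add_apply, Nat.add_sub_cancel' hnk]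
          exact hz n
        · have h1 := herr (n - k) (z n)
          have h2 : ((companion r) ^ (n - k)).mulVec (intToReal (z n))
              = ((companion r) ^ k)⁻¹.mulVec
                  (((companion r) ^ n).mulVec (intToReal (z n))) := by
            rw [Matrix.mulVec_mulVec]
            congr 1
            have hpow : (companion r) ^ n = (companion r) ^ k * (companion r) ^ (n - k) := by
              rw [← pow_add, Nat.add_sub_cancel' hnk]
            rw [hpow, ← Matrix.mul_assoc, hNinv, Matrix.one_mul]
          rw [h2] at h1
          have h3 := norm_sub_norm_le (intToReal ((srsTau r)^[n - k] (z n)))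
            (((companion r) ^ k)⁻¹.mulVec (((companion r) ^ n).mulVec (intToReal (z n))))
          linarith [hn1.le]
      choose w hwfix hwbdd using hw
      have hfinS : Finite {y : Fin d → ℤ // ‖intToReal y‖ ≤ B + 1} := by
        have := (srs_finite_bdd (d := d) (B + 1)).to_subtype
        exact this
      obtain ⟨k1, k2, hne, heq⟩ := Finite.exists_ne_map_eq_of_infinite
        (fun k => (⟨w k, hwbdd k⟩ : {y : Fin d → ℤ // ‖intToReal y‖ ≤ B + 1}))
      have hweq : w k1 = w k2 := congrArg Subtype.val heq
      have hmain : ∀ a b : ℕ, a < b → w a = w b → ∃ p : ℕ, 1 ≤ p ∧ (srsTau r)^[p] x = x := by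
        intro a b hab hwab
        refine ⟨b - a, by omega, ?_⟩
        calc (srsTau r)^[b - a] x
            = (srsTau r)^[b - a] ((srsTau r)^[a] (w a)) := by rw [hwfix a]
          _ = (srsTau r)^[(b - a) + a] (w a) := (Function.iterate_add_apply _ _ _ _).symm
          _ = (srsTau r)^[b] (w a) := by rw [Nat.sub_add_cancel hab.le]
          _ = (srsTau r)^[b] (w b) := by rw [hwab]
          _ = x := hwfix b
      rcases lt_trichotomy k1 k2 with h | h | h
      · exact hmain k1 k2 h hweq
      · exact absurd h hne
      · exact hmain k2 k1 h hweq.symm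
    · -- backward: periodic → 0 ∈ tile
      rintro ⟨p, hp, hx⟩
      refine ⟨fun n => (srsTau r)^[n * (p - 1)] x, fun n => ?_, ?_⟩
      · rw [← Function.iterate_add_apply]
        have hnp : n + n * (p - 1) = n * p := by
          obtain ⟨q, rfl⟩ : ∃ q, p = q + 1 := ⟨p - 1, by omega⟩
          simp [Nat.mul_succ, Nat.add_comm]
        rw [hnp, mul_comm, Function.iterate_mul]
        exact Function.iterate_fixed hx n
      · set K : ℝ := C * ‖intToReal x‖ + B with hK
        have hK0 : 0 ≤ K := by positivity
        have hKb : ∀ n : ℕ, ‖intToReal ((srsTau r)^[n * (p - 1)] x)‖ ≤ K := by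
          intro n
          have h1 := herr (n * (p - 1)) x
          have h2 := hbound (n * (p - 1)) (intToReal x)
          have h3 : C * ρ ^ (n * (p - 1)) * ‖intToReal x‖ ≤ C * 1 * ‖intToReal x‖ := by
            gcongr
            exact pow_le_one₀ hρ0 hρ1.le
          have h4 := norm_sub_norm_le (intToReal ((srsTau r)^[n * (p - 1)] x))
            (((companion r) ^ (n * (p - 1))).mulVec (intToReal x))
          have h5 : C * 1 * ‖intToReal x‖ = C * ‖intToReal x‖ := by ring
          linarith
        refine squeeze_zero_norm (a := fun n => C * ρ ^ n * K) (fun n => ?_) ?_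
        · exact (hbound n _).trans
            (mul_le_mul_of_nonneg_left (hKb n) (by positivity))
        · have h6 : Tendsto (fun n : ℕ => ρ ^ n) atTop (nhds 0) :=
            tendsto_pow_atTop_nhds_zero_of_lt_one hρ0 hρ1
          have h7 := (h6.const_mul C).mul_const K
          simpa using h7
  · -- finiteness
    refine Set.Finite.subset (srs_finite_bdd (d := d) B) ?_
    rintro z ⟨p, hp, hz⟩
    have hfix : ∀ n : ℕ, (srsTau r)^[n * p] z = z := by
      intro n
      rw [mul_comm, Function.iterate_mul]
      exact Function.iterate_fixed hz n
    have key : ∀ n : ℕ, ‖intToReal z‖ ≤ C * (ρ ^ p) ^ n * ‖intToReal z‖ + B := by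
      intro n
      have h1 := herr (n * p) z
      rw [hfix n] at h1
      have h2 := hbound (n * p) (intToReal z)
      have h3 := norm_sub_norm_le (intToReal z)
        (((companion r) ^ (n * p)).mulVec (intToReal z))
      rw [← pow_mul, mul_comm p n]
      linarith
    have hρp : ρ ^ p < 1 := by
      calc ρ ^ p ≤ ρ ^ 1 := pow_le_pow_of_le_one hρ0 hρ1.le hp
        _ = ρ := pow_one ρ
        _ < 1 := hρ1
    have h6 : Tendsto (fun n : ℕ => C * (ρ ^ p) ^ n * ‖intToReal z‖ + B) atTop
        (nhds (C * 0 * ‖intToReal z‖ + B)) := by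
      exact ((((tendsto_pow_atTop_nhds_zero_of_lt_one (pow_nonneg hρ0 p) hρp).const_mul
        C).mul_const _).add_const B)
    have h7 := ge_of_tendsto' h6 key
    simpa using h7
end
end
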